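/- The number of CSS codes with n physical qubits, p independent Z stabilizers, and q independent X stabilizers equals [∏_{i=1}^{p}(2^n − 2^{i−1})/∏_{i=1}^{p}(2^p − 2^{i−1})] · [∏_{i=1}^{q}(2^{n−p} − 2^{i−1})/∏_{i=1}^{q}(2^q − 2^{i−1})]. -/

import Mathlib

set_option maxHeartbeats 1000000

open Module Submodule Finset

attribute [local instance] Fintype.ofFinite

section count
variable {K V : Type*} [Field K] [Fintype K] [AddCommGroup V] [Module K V] [Finite V]

lemma count_subspaces {m k : ℕ} (hm : finrank K V = m) (hk : k ≤ m) :
    Nat.card {W : Submodule K V // finrank K W = k} *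
      ∏ i ∈ range k, (Fintype.card K ^ k - Fintype.card K ^ i) =
      ∏ i ∈ range k, (Fintype.card K ^ m - Fintype.card K ^ i) := by
  classical
  haveI : Finite (Submodule K V) := Finite.of_injective _ SetLike.coe_injective
  set F : {s : Fin k → V // LinearIndependent K s} → {W : Submodule K V // finrank K W = k} :=
    fun s => ⟨span K (Set.range s.1), by rw [finrank_span_eq_card s.2, Fintype.card_fin]⟩ with hF
  have fiberEquiv : ∀ W : {W : Submodule K V // finrank K W = k},
      {s : {s : Fin k → V // LinearIndependent K s} // F s = W} ≃
        {t : Fin k → W.1 // LinearIndependent K t} := by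
    intro W
    refine ⟨fun s => ⟨fun i => ⟨s.1.1 i, ?_⟩, ?_⟩, fun t => ⟨⟨fun i => (t.1 i : V), ?_⟩, ?_⟩, ?_, ?_⟩
    · have : span K (Set.range s.1.1) = W.1 := congrArg Subtype.val s.2
      exact this ▸ subset_span (Set.mem_range_self i)
    · exact LinearIndependent.of_comp W.1.subtype s.1.2
    · exact t.2.map' W.1.subtype (Submodule.ker_subtype _)
    · refine Subtype.ext ?_
      show span K (Set.range (W.1.subtype ∘ t.1)) = W.1
      have h1 : span K (Set.range t.1) = (⊤ : Submodule K W.1) := by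
        apply Submodule.eq_top_of_finrank_eq
        rw [finrank_span_eq_card t.2, Fintype.card_fin, W.2]
      rw [Set.range_comp, Submodule.span_image, h1, Submodule.map_subtype_top]
    · intro s; exact Subtype.ext (Subtype.ext (funext fun i => rfl))
    · intro t; exact Subtype.ext (funext fun i => Subtype.ext rfl)
  have key : Nat.card {s : Fin k → V // LinearIndependent K s} =
      Nat.card {W : Submodule K V // finrank K W = k} *
        ∏ i ∈ range k, (Fintype.card K ^ k - Fintype.card K ^ i) := by
    rw [Nat.card_congr (Equiv.sigmaFiberEquiv F).symm, Nat.card_eq_fintype_card,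
      Fintype.card_sigma]
    have : ∀ W : {W : Submodule K V // finrank K W = k},
        Fintype.card {s // F s = W} =
          ∏ i ∈ range k, (Fintype.card K ^ k - Fintype.card K ^ i) := by
      intro W
      rw [← Nat.card_eq_fintype_card, Nat.card_congr (fiberEquiv W),
        card_linearIndependent (by rw [W.2] : k ≤ finrank K W.1)]
      rw [W.2]
      exact Fin.prod_univ_eq_prod_range (fun i => Fintype.card K ^ k - Fintype.card K ^ i) k
    rw [Finset.sum_congr rfl fun W _ => this W, Finset.sum_const, Finset.card_univ,
      ← Nat.card_eq_fintype_card, smul_eq_mul]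
  rw [← key, card_linearIndependent (hm ▸ hk), hm]
  exact Fin.prod_univ_eq_prod_range (fun i => Fintype.card K ^ m - Fintype.card K ^ i) k

end count

section main

abbrev bform (n : ℕ) : LinearMap.BilinForm (ZMod 2) (Fin n → ZMod 2) :=
  LinearMap.mk₂ (ZMod 2) (fun v w => ∑ i, v i * w i)
    (fun a b w => by simp [add_mul, Finset.sum_add_distrib])
    (fun c a w => by simp [Finset.mul_sum, mul_assoc])
    (fun a b w => by simp [mul_add, Finset.sum_add_distrib])
    (fun c a w => by simp [Finset.mul_sum]; ring_nf; simp [mul_comm, mul_left_comm])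

lemma bform_nondegen (n : ℕ) : (bform n).Nondegenerate := by
  unfold LinearMap.BilinForm.Nondegenerate
  rw [LinearMap.IsRefl.nondegenerate_iff_separatingLeft (fun v w hvw => by simpa [mul_comm] using hvw)]
  intro v hv
  funext i
  have := hv (Pi.single i 1)
  simpa [Pi.single_apply, Finset.sum_ite_eq'] using this

lemma bform_refl (n : ℕ) : (bform n).IsRefl := by
  intro v w hvw
  simpa [mul_comm] using hvw

lemma prod_Icc_one (p : ℕ) (f : ℕ → ℚ) :
    ∏ i ∈ Finset.Icc 1 p, f i = ∏ i ∈ Finset.range p, f (i + 1) := by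
  rw [← Finset.Ico_add_one_right_eq_Icc, Finset.prod_Ico_eq_prod_range]
  simp [add_comm]

lemma cast_prod_pow {a b : ℕ} (hab : a ≤ b) :
    ((∏ i ∈ Finset.range a, (2 ^ b - 2 ^ i) : ℕ) : ℚ) =
      ∏ i ∈ Finset.range a, ((2 : ℚ) ^ b - 2 ^ i) := by
  rw [Nat.cast_prod]
  refine Finset.prod_congr rfl fun i hi => ?_
  have h2 : (2:ℕ) ^ i ≤ 2 ^ b :=
    Nat.pow_le_pow_right (by norm_num) ((Finset.mem_range.mp hi).le.trans hab)
  push_cast [h2]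
  ring

lemma prod_pos_ne (a : ℕ) : (∏ i ∈ Finset.range a, ((2 : ℚ) ^ a - 2 ^ i)) ≠ 0 := by
  refine Finset.prod_ne_zero_iff.mpr fun i hi => ?_
  have : (2:ℚ) ^ i < 2 ^ a :=
    pow_lt_pow_right₀ (by norm_num) (Finset.mem_range.mp hi)
  linarith

end main

theorem css_code_count (n p q : ℕ) (h : p + q ≤ n) :
    (Nat.card {VW : Submodule (ZMod 2) (Fin n → ZMod 2) ×
        Submodule (ZMod 2) (Fin n → ZMod 2) //
          Module.finrank (ZMod 2) VW.1 = p ∧ Module.finrank (ZMod 2) VW.2 = q ∧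
          ∀ w ∈ VW.2, ∀ v ∈ VW.1, ∑ i, v i * w i = 0} : ℚ)
      = (∏ i ∈ Finset.Icc 1 p, ((2 : ℚ) ^ n - 2 ^ (i - 1)) / ((2 : ℚ) ^ p - 2 ^ (i - 1))) *
        ∏ i ∈ Finset.Icc 1 q, ((2 : ℚ) ^ (n - p) - 2 ^ (i - 1)) / ((2 : ℚ) ^ q - 2 ^ (i - 1)) := by
  classical
  set K := ZMod 2
  set M := (Fin n → ZMod 2)
  set B := bform n with hB
  have hp' : p ≤ n := le_trans (Nat.le_add_right p q) h
  have hq' : q ≤ n - p := Nat.le_sub_of_add_le (by omega)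
  have hfrM : finrank K M = n := Module.finrank_fin_fun K
  haveI : Finite (Submodule K M) := Finite.of_injective _ SetLike.coe_injective
  -- step 1: sigma decomposition
  set S := {VW : Submodule K M × Submodule K M //
      finrank K VW.1 = p ∧ finrank K VW.2 = q ∧
      ∀ w ∈ VW.2, ∀ v ∈ VW.1, ∑ i, v i * w i = 0}
  have e1 : S ≃ Σ V : {V : Submodule K M // finrank K V = p},
      {W : Submodule K M // finrank K W = q ∧ W ≤ B.orthogonal V.1} := by
    refine ⟨fun x => ⟨⟨x.1.1, x.2.1⟩, ⟨x.1.2, x.2.2.1, fun w hw => ?_⟩⟩,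
      fun y => ⟨(y.1.1, y.2.1), y.1.2, y.2.2.1, fun w hw v hv => ?_⟩,
      fun x => rfl, fun y => rfl⟩
    · exact fun v hv => x.2.2.2 w hw v hv
    · exact y.2.2.2 hw v hv
  -- step 2: fibers
  have e2 : ∀ U : Submodule K M,
      {W' : Submodule K U // finrank K W' = q} ≃
        {W : Submodule K M // finrank K W = q ∧ W ≤ U} := by
    intro U
    refine Equiv.ofBijective
      (fun W' => ⟨W'.1.map U.subtype,
        by rw [Submodule.finrank_map_subtype_eq]; exact W'.2, Submodule.map_subtype_le _ _⟩)
      ⟨fun a b hab => Subtype.ext (Submodule.map_injective_of_injective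
        (Submodule.injective_subtype U) (congrArg Subtype.val hab)), ?_⟩
    rintro ⟨W, hWq, hWle⟩
    have hmc : (Submodule.comap U.subtype W).map U.subtype = W := by
      rw [Submodule.map_comap_subtype, inf_eq_right.mpr hWle]
    refine ⟨⟨Submodule.comap U.subtype W, ?_⟩, Subtype.ext hmc⟩
    rw [← Submodule.finrank_map_subtype_eq U (Submodule.comap U.subtype W), hmc]
    exact hWq
  -- orthogonal dimension
  have horth : ∀ V : {V : Submodule K M // finrank K V = p},
      finrank K (B.orthogonal V.1) = n - p := by
    intro V
    rw [LinearMap.BilinForm.finrank_orthogonal (bform_nondegen n), hfrM, V.2]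
  -- counting
  have hcard2 : Fintype.card K = 2 := rfl
  have hfib : ∀ V : {V : Submodule K M // finrank K V = p},
      Nat.card {W : Submodule K M // finrank K W = q ∧ W ≤ B.orthogonal V.1} *
        ∏ i ∈ Finset.range q, (2 ^ q - 2 ^ i) = ∏ i ∈ Finset.range q, (2 ^ (n - p) - 2 ^ i) := by
    intro V
    rw [← Nat.card_congr (e2 (B.orthogonal V.1))]
    have := count_subspaces (K := K) (V := B.orthogonal V.1) (horth V) hq'
    rwa [hcard2] at this
  have hV : Nat.card {V : Submodule K M // finrank K V = p} *
      ∏ i ∈ Finset.range p, (2 ^ p - 2 ^ i) = ∏ i ∈ Finset.range p, (2 ^ n - 2 ^ i) := by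
    have := count_subspaces (K := K) (V := M) hfrM hp'
    rwa [hcard2] at this
  -- assemble
  have hS : (Nat.card S : ℚ) *
      ((∏ i ∈ Finset.range p, ((2:ℚ) ^ p - 2 ^ i)) * ∏ i ∈ Finset.range q, ((2:ℚ) ^ q - 2 ^ i)) =
      (∏ i ∈ Finset.range p, ((2:ℚ) ^ n - 2 ^ i)) *
        ∏ i ∈ Finset.range q, ((2:ℚ) ^ (n - p) - 2 ^ i) := by
    rw [Nat.card_congr e1, Nat.card_eq_fintype_card, Fintype.card_sigma]
    push_cast
    have : ∀ V ∈ (Finset.univ : Finset {V : Submodule K M // finrank K V = p}),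
        (Fintype.card {W : Submodule K M // finrank K W = q ∧ W ≤ B.orthogonal V.1} : ℚ) *
          ((∏ i ∈ Finset.range p, ((2:ℚ) ^ p - 2 ^ i)) *
            ∏ i ∈ Finset.range q, ((2:ℚ) ^ q - 2 ^ i)) =
        (∏ i ∈ Finset.range p, ((2:ℚ) ^ p - 2 ^ i)) *
          ∏ i ∈ Finset.range q, ((2:ℚ) ^ (n-p) - 2 ^ i) := by
      intro V _
      have := hfib V
      rw [Nat.card_eq_fintype_card] at this
      have hq2 : ((Fintype.card {W : Submodule K M // finrank K W = q ∧ W ≤ B.orthogonal V.1} *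
          ∏ i ∈ Finset.range q, (2 ^ q - 2 ^ i) : ℕ) : ℚ) =
          ((∏ i ∈ Finset.range q, (2 ^ (n - p) - 2 ^ i) : ℕ) : ℚ) := by rw [this]
      rw [Nat.cast_mul, cast_prod_pow le_rfl, cast_prod_pow hq'] at hq2
      linear_combination (∏ i ∈ Finset.range p, ((2:ℚ) ^ p - 2 ^ i)) * hq2
    rw [Finset.sum_mul, Finset.sum_congr rfl this, Finset.sum_const, Finset.card_univ, nsmul_eq_mul,
      ← Nat.card_eq_fintype_card]
    have hp2 : ((Nat.card {V : Submodule K M // finrank K V = p} *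
        ∏ i ∈ Finset.range p, (2 ^ p - 2 ^ i) : ℕ) : ℚ) =
        ((∏ i ∈ Finset.range p, (2 ^ n - 2 ^ i) : ℕ) : ℚ) := by rw [hV]
    rw [Nat.cast_mul, cast_prod_pow le_rfl, cast_prod_pow hp'] at hp2
    linear_combination (∏ i ∈ Finset.range q, ((2:ℚ) ^ (n-p) - 2 ^ i)) * hp2
  have hcp := prod_pos_ne p
  have hcq := prod_pos_ne q
  have hSval : (Nat.card S : ℚ) =
      ((∏ i ∈ Finset.range p, ((2:ℚ) ^ n - 2 ^ i)) / ∏ i ∈ Finset.range p, ((2:ℚ) ^ p - 2 ^ i)) *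
      ((∏ i ∈ Finset.range q, ((2:ℚ) ^ (n-p) - 2 ^ i)) / ∏ i ∈ Finset.range q, ((2:ℚ) ^ q - 2 ^ i)) := by
    rw [div_mul_div_comm, eq_div_iff (mul_ne_zero hcp hcq)]
    exact hS
  rw [hSval, prod_Icc_one p, prod_Icc_one q]
  simp only [Nat.add_sub_cancel]
  rw [Finset.prod_div_distrib, Finset.prod_div_distrib]
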